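/- For every μ with 1/2 < μ ≤ 1, one has |h_μ(μ) − μ| ≤ (1/2)·(1−μ) + (1−μ)². -/
import Mathlib


open Set

/-- `h : [0,1] → [0,1]` satisfies the commuter functional equation for `T_μ`:
`h(x) = (1/2)·h(2μx)` for `0 ≤ x ≤ 1/2` and `h(x) = 1 - (1/2)·h(2μ(1-x))` for `1/2 < x ≤ 1`. -/
def IsCommuter (μ : ℝ) (h : ℝ → ℝ) : Prop :=
  (∀ x ∈ Icc (0:ℝ) 1, h x ∈ Icc (0:ℝ) 1) ∧
  (∀ x : ℝ, 0 ≤ x → x ≤ 1/2 → h x = (1/2) * h (2*μ*x)) ∧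
  (∀ x : ℝ, 1/2 < x → x ≤ 1 → h x = 1 - (1/2) * h (2*μ*(1-x)))

lemma commuter_key (μ : ℝ) (hμ1 : 1/2 < μ) (hμ2 : μ ≤ 1)
    (h : ℝ → ℝ) (hc : IsCommuter μ h) :
    ∀ n : ℕ, ∀ x ∈ Icc (0:ℝ) 1, |h x - x| ≤ (1 - μ) + (1/2)^n := by
  intro n
  induction n with
  | zero =>
    intro x hx
    have h1 := hc.1 x hx
    rw [abs_le]
    constructor <;> simp only [pow_zero] <;>
      [nlinarith [h1.1, h1.2, hx.1, hx.2]; nlinarith [h1.1, h1.2, hx.1, hx.2]]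
  | succ n ih =>
    intro x hx
    have hpn : (0:ℝ) < (1/2)^n := by positivity
    rcases le_or_gt x (1/2) with hx2 | hx2
    · have hy : 2*μ*x ∈ Icc (0:ℝ) 1 := by
        constructor
        · nlinarith [hx.1]
        · nlinarith [hx.1]
      have hiy := ih (2*μ*x) hy
      rw [abs_le] at hiy
      have he := hc.2.1 x hx.1 hx2
      have hps : ((1:ℝ)/2)^(n+1) = (1/2)*(1/2)^n := by ring
      have hprod : 0 ≤ (1-μ)*x := mul_nonneg (by linarith) hx.1
      have hprod2 : (1-μ)*x ≤ (1-μ)*(1/2) := by nlinarith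
      rw [abs_le, he]
      constructor
      · nlinarith [hiy.1]
      · nlinarith [hiy.2]
    · have hy : 2*μ*(1-x) ∈ Icc (0:ℝ) 1 := by
        constructor
        · nlinarith [hx.2]
        · nlinarith [hx.2]
      have hiy := ih (2*μ*(1-x)) hy
      rw [abs_le] at hiy
      have he := hc.2.2 x hx2 hx.2
      have hps : ((1:ℝ)/2)^(n+1) = (1/2)*(1/2)^n := by ring
      have hprod : 0 ≤ (1-μ)*(1-x) := mul_nonneg (by linarith) (by linarith [hx.2])
      have hprod2 : (1-μ)*(1-x) ≤ (1-μ)*(1/2) := by nlinarith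
      rw [abs_le, he]
      constructor
      · nlinarith [hiy.2]
      · nlinarith [hiy.1]

lemma commuter_close (μ : ℝ) (hμ1 : 1/2 < μ) (hμ2 : μ ≤ 1)
    (h : ℝ → ℝ) (hc : IsCommuter μ h) :
    ∀ x ∈ Icc (0:ℝ) 1, |h x - x| ≤ 1 - μ := by
  intro x hx
  by_contra hcon
  push_neg at hcon
  obtain ⟨n, hn⟩ := exists_pow_lt_of_lt_one (by linarith : (0:ℝ) < |h x - x| - (1 - μ))
    (by norm_num : (1:ℝ)/2 < 1)
  have := commuter_key μ hμ1 hμ2 h hc n x hx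
  linarith

/-- For `1/2 < μ ≤ 1`, the commuter satisfies `|h_μ(μ) - μ| ≤ (1/2)(1-μ) + (1-μ)²`. -/
theorem commuter_apply_self_bound (μ : ℝ) (hμ1 : 1/2 < μ) (hμ2 : μ ≤ 1)
    (h : ℝ → ℝ) (hc : IsCommuter μ h) :
    |h μ - μ| ≤ (1/2) * (1 - μ) + (1 - μ)^2 := by
  have e1 : h μ = 1 - (1/2) * h (2*μ*(1-μ)) := hc.2.2 μ hμ1 hμ2
  have ha0 : (0:ℝ) ≤ 2*μ*(1-μ) := by nlinarith
  have ha2 : 2*μ*(1-μ) ≤ 1/2 := by nlinarith [sq_nonneg (2*μ - 1)]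
  have e2 : h (2*μ*(1-μ)) = (1/2) * h (2*μ*(2*μ*(1-μ))) := hc.2.1 _ ha0 ha2
  have hz : 2*μ*(2*μ*(1-μ)) ∈ Icc (0:ℝ) 1 := by
    constructor
    · nlinarith
    · nlinarith [sq_nonneg (3*μ - 2), sq_nonneg (μ - 1)]
  have hcl := commuter_close μ hμ1 hμ2 h hc _ hz
  rw [abs_le] at hcl
  rw [e1, e2, abs_le]
  constructor
  · nlinarith [hcl.2, sq_nonneg (2*μ - 1)]
  · nlinarith [hcl.1, sq_nonneg (2*μ - 1)]
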